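/- Let E be a Banach space and let Ẽ : E → ℝ be a convex functional dominated by a sublinear functional Ê (i.e., Ẽ(X₁) − Ẽ(X₂) ≤ Ê(X₁ − X₂) for all X₁, X₂) with Ẽ(0) = 0. Then for every X ∈ E there exists a continuous linear functional L on E with L ≤ Ê pointwise such that Ẽ(X) = L(X) − α(L), where α(L) := sup_{Y ∈ E} (L(Y) − Ẽ(Y)); consequently Ẽ(X) = sup{ L(X) − α(L) : L linear continuous, L ≤ Ê }. -/

import Mathlib

open scoped ENNReal
open scoped Pointwise

/-- Representation theorem for a convex functional dominated by a sublinear functional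
on a Banach space: for every `X` there is a continuous linear functional `L ≤ Ê` with
`Ẽ X = L X - α L`, where `α L = ⨆ Y, (L Y - Ẽ Y)` (valued in `EReal`); consequently
`Ẽ X` equals the supremum of `L X - α L` over all such `L`. -/
theorem convex_expectation_representation
    (E : Type*) [NormedAddCommGroup E] [NormedSpace ℝ E] [CompleteSpace E]
    (Ehat : E → ℝ) (Etil : E → ℝ)
    (hEhat_cont : Continuous Ehat)
    (hEhat_subadd : ∀ x y : E, Ehat (x + y) ≤ Ehat x + Ehat y)
    (hEhat_hom : ∀ (c : ℝ), 0 ≤ c → ∀ x : E, Ehat (c • x) = c * Ehat x)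
    (hconv : ConvexOn ℝ Set.univ Etil)
    (hzero : Etil 0 = 0)
    (hdom : ∀ X₁ X₂ : E, Etil X₁ - Etil X₂ ≤ Ehat (X₁ - X₂))
    (α : (E →L[ℝ] ℝ) → EReal)
    (hα : ∀ L : E →L[ℝ] ℝ, α L = ⨆ Y : E, ((L Y - Etil Y : ℝ) : EReal))
    (X : E) :
    (∃ L : E →L[ℝ] ℝ, (∀ Y : E, L Y ≤ Ehat Y) ∧
      ((Etil X : ℝ) : EReal) = ((L X : ℝ) : EReal) - α L) ∧
    ((Etil X : ℝ) : EReal) =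
      ⨆ L : {L : E →L[ℝ] ℝ // ∀ Y : E, L Y ≤ Ehat Y},
        (((L : E →L[ℝ] ℝ) X : ℝ) : EReal) - α L := by
  have hE0 : Ehat 0 = 0 := by
    have := hEhat_hom 0 le_rfl 0
    simpa using this
  -- quotient function
  set q : E → ℝ → ℝ := fun h t => (Etil (X + t • h) - Etil X) / t with hq
  have hq_lb : ∀ h : E, ∀ t : ℝ, 0 < t → -Ehat (-h) ≤ q h t := by
    intro h t ht
    have h1 : Etil X - Etil (X + t • h) ≤ Ehat (-(t • h)) := by
      have := hdom X (X + t • h)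
      simpa using this
    have h2 : Ehat (-(t • h)) = t * Ehat (-h) := by
      rw [show -(t • h) = t • (-h) by simp, hEhat_hom t ht.le]
    rw [h2] at h1
    rw [hq]
    rw [le_div_iff₀ ht]
    nlinarith
  -- the set
  set S : E → Set ℝ := fun h => (q h) '' Set.Ioi 0 with hS
  have hSne : ∀ h, (S h).Nonempty := fun h => ⟨q h 1, ⟨1, by norm_num, rfl⟩⟩
  have hSbdd : ∀ h, BddBelow (S h) := by
    rintro h
    exact ⟨-Ehat (-h), by rintro x ⟨t, ht, rfl⟩; exact hq_lb h t ht⟩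
  set N : E → ℝ := fun h => sInf (S h) with hN
  have hN_le : ∀ h, ∀ t, 0 < t → N h ≤ q h t := fun h t ht =>
    csInf_le (hSbdd h) ⟨t, ht, rfl⟩
  have hN_le1 : ∀ h, N h ≤ Etil (X + h) - Etil X := by
    intro h
    have := hN_le h 1 one_pos
    simpa [hq] using this
  -- key convexity inequality
  have hkey : ∀ (h₁ h₂ : E) (t₁ t₂ : ℝ), 0 < t₁ → 0 < t₂ →
      N (h₁ + h₂) ≤ q h₁ t₁ + q h₂ t₂ := by
    intro h₁ h₂ t₁ t₂ ht₁ ht₂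
    set s : ℝ := t₁ * t₂ / (t₁ + t₂) with hs
    have hts : 0 < t₁ + t₂ := by linarith
    have hspos : 0 < s := by positivity
    set l : ℝ := t₂ / (t₁ + t₂) with hl
    have hl0 : 0 ≤ l := by positivity
    have hl1 : 0 ≤ 1 - l := by
      rw [hl]; rw [sub_nonneg, div_le_one hts]; linarith
    have hll : l + (1 - l) = 1 := by ring
    have hcomb : X + s • (h₁ + h₂) = l • (X + t₁ • h₁) + (1 - l) • (X + t₂ • h₂) := by
      rw [hs, hl]
      match_scalars <;> field_simp <;> ring
    have hcx := hconv.2 (Set.mem_univ (X + t₁ • h₁)) (Set.mem_univ (X + t₂ • h₂)) hl0 hl1 hll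
    rw [← hcomb] at hcx
    simp only [smul_eq_mul] at hcx
    have hcx' : Etil (X + s • (h₁ + h₂)) - Etil X ≤
        l * (Etil (X + t₁ • h₁) - Etil X) + (1 - l) * (Etil (X + t₂ • h₂) - Etil X) := by
      nlinarith [hcx]
    have e3 : (l * (Etil (X + t₁ • h₁) - Etil X) + (1 - l) * (Etil (X + t₂ • h₂) - Etil X)) / s
        = (Etil (X + t₁ • h₁) - Etil X) / t₁ + (Etil (X + t₂ • h₂) - Etil X) / t₂ := by
      rw [hl, hs]
      field_simp
      ring
    have hq3 : q (h₁ + h₂) s ≤ q h₁ t₁ + q h₂ t₂ := by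
      rw [hq]
      simp only
      rw [← e3]
      gcongr
    exact (hN_le _ s hspos).trans hq3
  have hN_add : ∀ h₁ h₂, N (h₁ + h₂) ≤ N h₁ + N h₂ := by
    intro h₁ h₂
    have step1 : ∀ t₂, 0 < t₂ → N (h₁ + h₂) - q h₂ t₂ ≤ N h₁ := by
      intro t₂ ht₂
      apply le_csInf (hSne h₁)
      rintro x ⟨t₁, ht₁, rfl⟩
      linarith [hkey h₁ h₂ t₁ t₂ ht₁ ht₂]
    have step2 : N (h₁ + h₂) - N h₁ ≤ N h₂ := by
      apply le_csInf (hSne h₂)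
      rintro x ⟨t₂, ht₂, rfl⟩
      linarith [step1 t₂ ht₂]
    linarith
  have hN_hom : ∀ c : ℝ, 0 < c → ∀ h, N (c • h) = c * N h := by
    intro c hc h
    have himg : S (c • h) = c • S h := by
      ext x
      simp only [hS, Set.mem_image, Set.mem_smul_set, Set.mem_Ioi, smul_eq_mul]
      constructor
      · rintro ⟨t, ht, rfl⟩
        refine ⟨q h (t * c), ⟨t * c, by positivity, rfl⟩, ?_⟩
        rw [hq]
        simp only
        rw [show t • c • h = (t * c) • h by rw [smul_smul]]
        rw [eq_div_iff (ne_of_gt ht)]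
        field_simp
      · rintro ⟨y, ⟨t, ht, rfl⟩, rfl⟩
        refine ⟨t / c, by positivity, ?_⟩
        rw [hq]
        simp only
        rw [show (t / c) • c • h = t • h by rw [smul_smul]; congr 1; field_simp]
        rw [div_div_eq_mul_div]
        field_simp
    simp only [hN]
    rw [himg, Real.sInf_smul_of_nonneg hc.le, smul_eq_mul]
  -- Hahn-Banach
  have hN0 : N 0 = 0 := by
    have h1 : N 0 ≤ 0 := by simpa using hN_le1 0
    have h3 : (0:ℝ) ≤ N 0 := by
      apply le_csInf (hSne 0)
      rintro x ⟨t, ht, rfl⟩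
      have := hq_lb 0 t ht
      simpa [hE0] using this
    linarith
  obtain ⟨g, -, hg⟩ := exists_extension_of_le_sublinear
    (LinearMap.toPMap (0 : E →ₗ[ℝ] ℝ) ⊥) N hN_hom hN_add
    (by
      rintro ⟨x, hx⟩
      have hx0 : x = 0 := (Submodule.mem_bot ℝ).mp hx
      subst hx0
      exact hN0.ge)
  -- g ≤ Ehat
  have hgE : ∀ h, g h ≤ Ehat h := by
    intro h
    refine (hg h).trans ((hN_le1 h).trans ?_)
    have := hdom (X + h) X
    simpa using this
  -- bound on Ehat
  obtain ⟨C, hC0, hC⟩ : ∃ C : ℝ, 0 < C ∧ ∀ x : E, Ehat x ≤ C * ‖x‖ := by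
    have hc0 : ContinuousAt Ehat 0 := hEhat_cont.continuousAt
    rw [Metric.continuousAt_iff] at hc0
    obtain ⟨δ, hδ, hδ'⟩ := hc0 1 one_pos
    refine ⟨2 / δ, by positivity, fun x => ?_⟩
    rcases eq_or_ne x 0 with rfl | hx
    · simp [hE0]
    · have hnx : 0 < ‖x‖ := norm_pos_iff.mpr hx
      set u : E := (δ / (2 * ‖x‖)) • x with hu
      have hnu : ‖u‖ = δ / 2 := by
        rw [hu, norm_smul, Real.norm_eq_abs, abs_of_pos (by positivity)]
        field_simp
      have hub : dist u 0 < δ := by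
        rw [dist_zero_right, hnu]; linarith
      have := hδ' hub
      rw [dist_eq_norm, hE0, sub_zero, Real.norm_eq_abs] at this
      have h1 : Ehat u < 1 := (le_abs_self _).trans_lt this
      have hEu : Ehat u = (δ / (2 * ‖x‖)) * Ehat x := by
        rw [hu, hEhat_hom _ (by positivity)]
      rw [hEu, div_mul_eq_mul_div, div_lt_one (by positivity)] at h1
      rw [div_mul_eq_mul_div, le_div_iff₀ hδ]
      nlinarith
  -- continuity of g
  have hgbd : ∀ x, ‖g x‖ ≤ C * ‖x‖ := by
    intro x
    rw [Real.norm_eq_abs, abs_le]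
    constructor
    · have := (hgE (-x)).trans (hC (-x))
      simp only [map_neg, norm_neg] at this
      linarith
    · exact (hgE x).trans (hC x)
  set L : E →L[ℝ] ℝ := LinearMap.mkContinuous g C hgbd with hL
  have hLapp : ∀ x, L x = g x := fun x => rfl
  -- subgradient
  have hsub : ∀ Y : E, L Y - L X ≤ Etil Y - Etil X := by
    intro Y
    have := (hg (Y - X)).trans (hN_le1 (Y - X))
    rw [map_sub] at this
    simp only [add_sub_cancel] at this
    rw [hLapp, hLapp]
    linarith
  -- compute α L
  have hαL : α L = ((L X - Etil X : ℝ) : EReal) := by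
    rw [hα]
    apply le_antisymm
    · apply iSup_le
      intro Y
      rw [EReal.coe_le_coe_iff]
      linarith [hsub Y]
    · exact le_iSup (fun Y : E => ((L Y - Etil Y : ℝ) : EReal)) X
  have hmain : ((Etil X : ℝ) : EReal) = ((L X : ℝ) : EReal) - α L := by
    rw [hαL, ← EReal.coe_sub, EReal.coe_eq_coe_iff]
    ring
  have hLE : ∀ Y : E, L Y ≤ Ehat Y := fun Y => hgE Y
  refine ⟨⟨L, hLE, hmain⟩, ?_⟩
  apply le_antisymm
  · rw [hmain]
    exact le_iSup (fun L' : {L : E →L[ℝ] ℝ // ∀ Y : E, L Y ≤ Ehat Y} =>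
      (((L' : E →L[ℝ] ℝ) X : ℝ) : EReal) - α L') ⟨L, hLE⟩
  · apply iSup_le
    rintro ⟨L', hL'⟩
    have h1 : ((L' X - Etil X : ℝ) : EReal) ≤ α L' := by
      rw [hα]
      exact le_iSup (fun Y : E => ((L' Y - Etil Y : ℝ) : EReal)) X
    calc ((L' X : ℝ) : EReal) - α L' ≤ ((L' X : ℝ) : EReal) - ((L' X - Etil X : ℝ) : EReal) :=
          EReal.sub_le_sub le_rfl h1
      _ = ((Etil X : ℝ) : EReal) := by
          rw [← EReal.coe_sub, EReal.coe_eq_coe_iff]; ring
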